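/- If N = (p₁p₂···p_t)^{2β} with p₁ < p₂ < ··· < p_t distinct primes is quasiperfect, then 3 divides 2β + 1. -/

import Mathlib

open Finset

/-- sum-of-divisors function -/
def sigma (n : ℕ) : ℕ := ∑ d ∈ n.divisors, d

private lemma sigma_eq (n : ℕ) : sigma n = ArithmeticFunction.sigma 1 n :=
  (ArithmeticFunction.sigma_one_apply n).symm

private lemma geom_sum_of_sq_eq_one {R : Type*} [CommRing R] (x : R) (hx : x ^ 2 = 1) (b : ℕ) :
    ∑ i ∈ range (2 * b + 1), x ^ i = (b : R) * (1 + x) + 1 := by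
  induction b with
  | zero => simp
  | succ c ih =>
    have h1 : 2 * (c + 1) + 1 = (2 * c + 1) + 1 + 1 := by ring
    have hx1 : x ^ (2 * c + 1) = x := by
      rw [pow_succ, pow_mul, hx, one_pow, one_mul]
    have hx2 : x ^ (2 * c + 1 + 1) = 1 := by
      have h2 : 2 * c + 1 + 1 = 2 * (c + 1) := by ring
      rw [h2, pow_mul, hx, one_pow]
    rw [h1, sum_range_succ, sum_range_succ, ih, hx1, hx2]
    push_cast
    ring

private lemma list_prod_mod8 (l : List ℕ) (h : ∀ x ∈ l, x % 8 = 1 ∨ x % 8 = 3) :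
    l.prod % 8 = 1 ∨ l.prod % 8 = 3 := by
  induction l with
  | nil => simp
  | cons a tl ih =>
    have ha := h a List.mem_cons_self
    have ht := ih fun x hx => h x (List.mem_cons_of_mem _ hx)
    rw [List.prod_cons, Nat.mul_mod]
    rcases ha with ha | ha <;> rcases ht with ht | ht <;> rw [ha, ht] <;> norm_num

private lemma prime_mod8 {N s q : ℕ} (hq : q.Prime) (hN : N = s ^ 2) (hdvd : q ∣ 2 * N + 1) :
    q % 8 = 1 ∨ q % 8 = 3 := by
  have hq2 : q ≠ 2 := by
    rintro rfl
    omega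
  haveI : Fact q.Prime := ⟨hq⟩
  have h0 : ((2 * N + 1 : ℕ) : ZMod q) = 0 := (ZMod.natCast_eq_zero_iff _ _).mpr hdvd
  rw [hN] at h0
  push_cast at h0
  have hsq : IsSquare (-2 : ZMod q) :=
    ⟨2 * (s : ZMod q), by linear_combination (-2 : ZMod q) * h0⟩
  exact (ZMod.exists_sq_eq_neg_two_iff hq2).mp hsq

private lemma dvd_mod8 {N s d : ℕ} (hN : N = s ^ 2) (hd : d ∣ 2 * N + 1) :
    d % 8 = 1 ∨ d % 8 = 3 := by
  have hd0 : d ≠ 0 := by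
    rintro rfl
    have := Nat.eq_zero_of_zero_dvd hd
    omega
  rw [← Nat.prod_primeFactorsList hd0]
  exact list_prod_mod8 _ fun x hx =>
    prime_mod8 (Nat.prime_of_mem_primeFactorsList hx) hN
      ((Nat.dvd_of_mem_primeFactorsList hx).trans hd)

private lemma sum_two_pow (k : ℕ) : ∑ i ∈ range k, 2 ^ i = 2 ^ k - 1 := by
  induction k with
  | zero => simp
  | succ n ih =>
    rw [sum_range_succ, ih]
    have h1 : 1 ≤ 2 ^ n := Nat.one_le_two_pow
    have h2 : 2 ^ (n + 1) = 2 * 2 ^ n := by ring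
    omega

/-- If N = (p₁p₂⋯p_t)^{2β} with p₁ < ⋯ < p_t primes is quasiperfect,
    then 3 divides 2β + 1. -/
theorem quasiperfect_equal_exponents (t β N : ℕ) (p : Fin t → ℕ)
    (hp : ∀ i, (p i).Prime) (hmono : StrictMono p)
    (hN : N = (∏ i, p i) ^ (2 * β)) (hqp : sigma N = 2 * N + 1) :
    3 ∣ 2 * β + 1 := by
  classical
  have hN1 : N ≠ 1 := by
    intro h
    rw [h] at hqp
    norm_num [sigma] at hqp
  by_cases hβ0 : β = 0
  · exact absurd (by rw [hN, hβ0]; simp) hN1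
  by_cases ht0 : t = 0
  · exact absurd (by subst ht0; rw [hN]; simp) hN1
  have hβ : 1 ≤ β := Nat.one_le_iff_ne_zero.mpr hβ0
  -- N is a square
  have hNs : N = ((∏ i, p i) ^ β) ^ 2 := by
    rw [hN, mul_comm 2 β, pow_mul]
  -- factorization of sigma
  have hpair : ((univ : Finset (Fin t)) : Set (Fin t)).Pairwise
      (Function.onFun Nat.Coprime fun i => p i ^ (2 * β)) := by
    intro i _ j _ hij
    exact Nat.Coprime.pow _ _ ((Nat.coprime_primes (hp i) (hp j)).mpr (hmono.injective.ne hij))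
  have hfac : sigma N = ∏ i, sigma (p i ^ (2 * β)) := by
    rw [hN, ← Finset.prod_pow]
    simp only [sigma_eq]
    exact ArithmeticFunction.IsMultiplicative.map_prod _
      ArithmeticFunction.isMultiplicative_sigma univ hpair
  have hσpp : ∀ pr : ℕ, pr.Prime →
      sigma (pr ^ (2 * β)) = ∑ i ∈ range (2 * β + 1), pr ^ i := by
    intro pr hpr
    rw [sigma_eq]
    exact ArithmeticFunction.sigma_one_apply_prime_pow hpr
  have hdq : ∀ i : Fin t, sigma (p i ^ (2 * β)) ∣ 2 * N + 1 := by
    intro i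
    rw [← hqp, hfac]
    exact Finset.dvd_prod_of_mem _ (mem_univ i)
  -- no p i = 2
  have h2 : ∀ i, p i ≠ 2 := by
    intro i h2i
    have hm := hdq i
    rw [h2i] at hm
    have hmod := dvd_mod8 hNs hm
    have hval : sigma (2 ^ (2 * β)) = 2 ^ (2 * β + 1) - 1 := by
      rw [hσpp 2 Nat.prime_two, sum_two_pow]
    have hpow : 2 ^ (2 * β + 1) = 8 * 2 ^ (2 * (β - 1)) := by
      rw [show 2 * β + 1 = 3 + 2 * (β - 1) by omega, pow_add]
      norm_num
    have h1 : 1 ≤ 2 ^ (2 * (β - 1)) := Nat.one_le_two_pow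
    omega
  -- N is odd
  have hoddN : ¬ (2 ∣ N) := by
    intro hdvd
    rw [hN] at hdvd
    have h2P : 2 ∣ ∏ i, p i := Nat.Prime.dvd_of_dvd_pow Nat.prime_two hdvd
    obtain ⟨i, _, hdi⟩ := (Nat.prime_iff.mp Nat.prime_two).dvd_finset_prod_iff _ |>.mp h2P
    exact h2 i ((Nat.prime_dvd_prime_iff_eq Nat.prime_two (hp i)).mp hdi).symm
  have hoddp : ∀ i, p i % 2 = 1 := by
    intro i
    have := (hp i).two_le
    rcases Nat.mod_two_eq_zero_or_one (p i) with h | h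
    · exact absurd ((Nat.prime_dvd_prime_iff_eq Nat.prime_two (hp i)).mp
        (Nat.dvd_of_mod_eq_zero h)).symm (h2 i)
    · exact h
  -- 2β+1 ≡ 3 mod 4
  have hn4 : (2 * β + 1) % 4 = 3 := by
    by_contra hc
    have hn1 : (2 * β + 1) % 4 = 1 := by omega
    have hfac4 : ∀ i : Fin t, ((sigma (p i ^ (2 * β)) : ℕ) : ZMod 4) = 1 := by
      intro i
      rw [hσpp _ (hp i)]
      push_cast
      have hpo := hoddp i
      rcases (by omega : p i % 4 = 1 ∨ p i % 4 = 3) with h | h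
      · have hx : ((p i : ℕ) : ZMod 4) = 1 := by
          rw [← ZMod.natCast_mod, h, Nat.cast_one]
        rw [hx]
        simp only [one_pow, sum_const, card_range, nsmul_eq_mul, mul_one]
        rw [← ZMod.natCast_mod (2 * β + 1) 4, hn1, Nat.cast_one]
      · have hx : ((p i : ℕ) : ZMod 4) = 3 := by
          rw [← ZMod.natCast_mod, h]; norm_num
        rw [hx, geom_sum_of_sq_eq_one _ (by decide) β]
        have h40 : (1 + 3 : ZMod 4) = 0 := by decide
        rw [h40, mul_zero, zero_add]
    have hcast : ((sigma N : ℕ) : ZMod 4) = 1 := by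
      rw [hfac]
      push_cast
      exact Finset.prod_eq_one fun i _ => hfac4 i
    have hval : (sigma N) % 4 = 1 := by
      have := ZMod.val_natCast (n := 4) (sigma N)
      rw [hcast] at this
      exact this.symm
    rw [hqp] at hval
    have hN2 : N % 2 = 1 := by omega
    omega
  -- no p i = 3
  have h3 : ∀ i, p i ≠ 3 := by
    intro i h3i
    have hu := hdq i
    rw [h3i] at hu
    have hmod := dvd_mod8 hNs hu
    have hcast : ((sigma (3 ^ (2 * β)) : ℕ) : ZMod 8) = 5 := by
      rw [hσpp 3 Nat.prime_three]
      push_cast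
      rw [geom_sum_of_sq_eq_one _ (by decide) β]
      obtain ⟨c, hc⟩ : ∃ c, β = 2 * c + 1 := ⟨β / 2, by omega⟩
      rw [hc]
      push_cast
      have h8 : (8 : ZMod 8) = 0 := by decide
      linear_combination (c : ZMod 8) * h8
    have hval : (sigma (3 ^ (2 * β))) % 8 = 5 := by
      have := ZMod.val_natCast (n := 8) (sigma (3 ^ (2 * β)))
      rw [hcast] at this
      exact this.symm
    omega
  -- 3 does not divide N, so N ≡ 1 mod 3
  have hP3 : ¬ ((3 : ℕ) ∣ ∏ i, p i) := by
    intro hdvd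
    obtain ⟨i, _, hdi⟩ := (Nat.prime_iff.mp Nat.prime_three).dvd_finset_prod_iff _ |>.mp hdvd
    exact h3 i ((Nat.prime_dvd_prime_iff_eq Nat.prime_three (hp i)).mp hdi).symm
  have hNmod3 : ((N : ℕ) : ZMod 3) = 1 := by
    have hPne : ((∏ i, p i : ℕ) : ZMod 3) ≠ 0 := fun h0 =>
      hP3 ((ZMod.natCast_eq_zero_iff _ _).mp h0)
    have hsq1 : ∀ x : ZMod 3, x ≠ 0 → x ^ 2 = 1 := by decide
    have hPne2 : (∏ i, ((p i : ℕ) : ZMod 3)) ≠ 0 := by push_cast at hPne; exact hPne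
    rw [hN]
    push_cast
    rw [mul_comm 2 β, pow_mul]
    exact hsq1 _ (pow_ne_zero β hPne2)
  have h3dvd : (3 : ℕ) ∣ ∏ i, sigma (p i ^ (2 * β)) := by
    rw [← hfac, hqp]
    refine (ZMod.natCast_eq_zero_iff _ 3).mp ?_
    push_cast
    rw [hNmod3]
    decide
  obtain ⟨i, _, hdi⟩ := (Nat.prime_iff.mp Nat.prime_three).dvd_finset_prod_iff _ |>.mp h3dvd
  have hmodσ : ((sigma (p i ^ (2 * β)) : ℕ) : ZMod 3) = 0 :=
    (ZMod.natCast_eq_zero_iff _ _).mpr hdi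
  rw [hσpp _ (hp i)] at hmodσ
  push_cast at hmodσ
  have hpi3 : ¬ ((3 : ℕ) ∣ p i) := fun hd =>
    h3 i ((Nat.prime_dvd_prime_iff_eq Nat.prime_three (hp i)).mp hd).symm
  have hpm : p i % 3 = 1 ∨ p i % 3 = 2 := by omega
  rcases hpm with h | h
  · -- p i ≡ 1 mod 3 : sum ≡ 2β+1
    have hx : ((p i : ℕ) : ZMod 3) = 1 := by
      rw [← ZMod.natCast_mod, h, Nat.cast_one]
    rw [hx] at hmodσ
    simp only [one_pow, sum_const, card_range, nsmul_eq_mul, mul_one] at hmodσ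
    exact (ZMod.natCast_eq_zero_iff (2 * β + 1) 3).mp hmodσ
  · -- p i ≡ 2 mod 3 : sum ≡ 1, contradiction
    exfalso
    have hx : ((p i : ℕ) : ZMod 3) = 2 := by
      rw [← ZMod.natCast_mod, h]; norm_num
    rw [hx, geom_sum_of_sq_eq_one _ (by decide) β] at hmodσ
    have h30 : (1 + 2 : ZMod 3) = 0 := by decide
    rw [h30, mul_zero, zero_add] at hmodσ
    exact absurd hmodσ (by decide)
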